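/- arXiv:2412.06527 — 3 statements merged into one kernel-verified Lean document; each statement's English description precedes it below -/
import Mathlib

section
/- In each of the three cases, the identity B_4 = −X(2B_3 + (1 + r_0)B_2 + r_0·B + r_1) holds in Q[[q]]. -/
open PowerSeries Finset

noncomputable section

/-- The truncated harmonic sum `∑_{m=1}^{n} 1/m`. -/
def harm (n : ℕ) : ℚ := ∑ m ∈ Finset.range n, (1 : ℚ) / (m + 1)

/-- The truncated sum `∑_{m=1}^{n} 1/m^2`. -/
def harm2 (n : ℕ) : ℚ := ∑ m ∈ Finset.range n, (1 : ℚ) / ((m : ℚ) + 1) ^ 2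

/-- `c_d = (kd)! / ∏_i (a_i d)!`. -/
def cCoef (a : Fin 5 → ℕ) (k : ℕ) (d : ℕ) : ℚ :=
  (Nat.factorial (k * d) : ℚ) / ∏ i, (Nat.factorial (a i * d) : ℚ)

/-- `s_d = k·∑_{m=1}^{kd} 1/m − ∑_i a_i·∑_{m=1}^{a_i d} 1/m`. -/
def sCoef (a : Fin 5 → ℕ) (k : ℕ) (d : ℕ) : ℚ :=
  (k : ℚ) * harm (k * d) - ∑ i, (a i : ℚ) * harm (a i * d)

/-- `t_d = k²·∑_{m=1}^{kd} 1/m² − ∑_i a_i²·∑_{m=1}^{a_i d} 1/m²`. -/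
def tCoef (a : Fin 5 → ℕ) (k : ℕ) (d : ℕ) : ℚ :=
  (k : ℚ) ^ 2 * harm2 (k * d) - ∑ i, (a i : ℚ) ^ 2 * harm2 (a i * d)

/-- `I_0 = ∑_{d≥0} c_d q^d`. -/
def I₀ (a : Fin 5 → ℕ) (k : ℕ) : ℚ⟦X⟧ := PowerSeries.mk fun d => cCoef a k d

/-- `I_1 = ∑_{d≥1} c_d s_d q^d` (note `s_0 = 0`). -/
def I₁ (a : Fin 5 → ℕ) (k : ℕ) : ℚ⟦X⟧ := PowerSeries.mk fun d => cCoef a k d * sCoef a k d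

/-- `I_2 = ∑_{d≥1} c_d (s_d² − t_d)/2 · q^d`. -/
def I₂ (a : Fin 5 → ℕ) (k : ℕ) : ℚ⟦X⟧ :=
  PowerSeries.mk fun d => cCoef a k d * (sCoef a k d ^ 2 - tCoef a k d) / 2

/-- The derivation `D = q·d/dq` on `ℚ⟦q⟧`. -/
def Dq (f : ℚ⟦X⟧) : ℚ⟦X⟧ := PowerSeries.X * f.derivativeFun

/-- `I_{11} = 1 + D(I_1/I_0)` (the quotient is `I₁ * I₀⁻¹`, with `I₀` a unit). -/
def I₁₁ (a : Fin 5 → ℕ) (k : ℕ) : ℚ⟦X⟧ := 1 + Dq (I₁ a k * (I₀ a k)⁻¹)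

/-- `I_{22} = 1 + D((D(I_2/I_0) + I_1/I_0)/I_{11})`. -/
def I₂₂ (a : Fin 5 → ℕ) (k : ℕ) : ℚ⟦X⟧ :=
  1 + Dq ((Dq (I₂ a k * (I₀ a k)⁻¹) + I₁ a k * (I₀ a k)⁻¹) * (I₁₁ a k)⁻¹)

/-- `r = k^k / ∏_i a_i^{a_i}`. -/
def rConst (a : Fin 5 → ℕ) (k : ℕ) : ℚ := (k : ℚ) ^ k / ∏ i, (a i : ℚ) ^ (a i)

/-- `Y = (1 − rq)⁻¹`. -/
def Yser (a : Fin 5 → ℕ) (k : ℕ) : ℚ⟦X⟧ :=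
  (1 - PowerSeries.C (rConst a k) * PowerSeries.X)⁻¹

/-- `X = 1 − Y`. -/
def Xser (a : Fin 5 → ℕ) (k : ℕ) : ℚ⟦X⟧ := 1 - Yser a k

/-- The generators `A_m = D^m I_{11} / I_{11}`. -/
def Agen (a : Fin 5 → ℕ) (k : ℕ) (m : ℕ) : ℚ⟦X⟧ := Dq^[m] (I₁₁ a k) * (I₁₁ a k)⁻¹

/-- The generators `B_m = D^m I_0 / I_0`. -/
def Bgen (a : Fin 5 → ℕ) (k : ℕ) (m : ℕ) : ℚ⟦X⟧ := Dq^[m] (I₀ a k) * (I₀ a k)⁻¹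

/-- Fixing one of the three cases `Z_6 ⊂ ℙ(1,1,1,1,2)`, `Z_8 ⊂ ℙ(1,1,1,1,4)`,
`Z_10 ⊂ ℙ(1,1,1,2,5)`. -/
def CaseHyp (a : Fin 5 → ℕ) (k : ℕ) : Prop :=
  (a = ![1, 1, 1, 1, 2] ∧ k = 6) ∨ (a = ![1, 1, 1, 1, 4] ∧ k = 8) ∨
    (a = ![1, 1, 1, 2, 5] ∧ k = 10)


lemma fact_step (j c : ℕ) :
    (Nat.factorial (j + c) : ℚ) = (∏ i ∈ Finset.range c, ((j : ℚ) + i + 1)) * Nat.factorial j := by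
  induction c with
  | zero => simp
  | succ b ih =>
    rw [← Nat.add_assoc, Nat.factorial_succ, Finset.prod_range_succ]
    push_cast
    rw [ih]; ring

lemma coeff_Dq (f : ℚ⟦X⟧) (n : ℕ) : coeff n (Dq f) = n * coeff n f := by
  cases n with
  | zero => simp [Dq]
  | succ m => rw [Dq, coeff_succ_X_mul, show f.derivativeFun = derivative ℚ f from rfl, coeff_derivative]; push_cast; ring

lemma coeff_Dq_iter (m : ℕ) (f : ℚ⟦X⟧) (n : ℕ) :
    coeff n (Dq^[m] f) = (n : ℚ) ^ m * coeff n f := by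
  induction m with
  | zero => simp
  | succ j ih => rw [Function.iterate_succ_apply', coeff_Dq, ih]; ring

lemma coeff_DqI (a : Fin 5 → ℕ) (k m n : ℕ) :
    coeff n (Dq^[m] (I₀ a k)) = (n : ℚ) ^ m * cCoef a k n := by
  rw [coeff_Dq_iter, I₀, coeff_mk]

lemma cCoef_zero (a : Fin 5 → ℕ) (k : ℕ) : cCoef a k 0 = 1 := by
  simp [cCoef, Nat.factorial]

lemma master (a : Fin 5 → ℕ) (k : ℕ) (r₀ r₁ : ℚ)
    (hrec : ∀ m : ℕ, ((m : ℚ) + 1) ^ 4 * cCoef a k (m + 1) =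
      rConst a k * cCoef a k m *
        ((m : ℚ) ^ 4 + 2 * (m : ℚ) ^ 3 + (1 + r₀) * (m : ℚ) ^ 2 + r₀ * m + r₁)) :
    Bgen a k 4 =
      -(Xser a k) * (2 * Bgen a k 3 + (1 + PowerSeries.C r₀) * Bgen a k 2 +
        PowerSeries.C r₀ * Bgen a k 1 + PowerSeries.C r₁) := by
  set r := rConst a k with hr
  set u : ℚ⟦X⟧ := 1 - PowerSeries.C r * PowerSeries.X with hu
  have hu0 : constantCoeff u ≠ 0 := by
    simp [hu]
  have hI0 : constantCoeff (I₀ a k) ≠ 0 := by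
    rw [← coeff_zero_eq_constantCoeff_apply, I₀, coeff_mk, cCoef_zero]; norm_num
  set W : ℚ⟦X⟧ := 2 * Dq^[3] (I₀ a k) + (1 + PowerSeries.C r₀) * Dq^[2] (I₀ a k) +
      PowerSeries.C r₀ * Dq^[1] (I₀ a k) + PowerSeries.C r₁ * I₀ a k with hW
  have E : u * Dq^[4] (I₀ a k) = (PowerSeries.C r * PowerSeries.X) * W := by
    ext n
    have lhs : u * Dq^[4] (I₀ a k) =
        Dq^[4] (I₀ a k) - PowerSeries.C r * (PowerSeries.X * Dq^[4] (I₀ a k)) := by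
      rw [hu]; ring
    rw [lhs, mul_assoc, map_sub, coeff_C_mul, coeff_C_mul]
    cases n with
    | zero =>
      rw [coeff_DqI, coeff_zero_X_mul, coeff_zero_X_mul]
      norm_num
    | succ m =>
      have h2 : (coeff m) (2 * Dq^[3] (I₀ a k)) = 2 * ((m:ℚ)^3 * cCoef a k m) := by
        rw [two_mul, map_add, coeff_DqI]; ring
      have h12 : (coeff m) ((1 + PowerSeries.C r₀) * Dq^[2] (I₀ a k)) =
          (1 + r₀) * ((m:ℚ)^2 * cCoef a k m) := by
        rw [add_mul, one_mul, map_add, coeff_C_mul, coeff_DqI]; ring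
      rw [coeff_succ_X_mul, coeff_succ_X_mul, coeff_DqI, coeff_DqI, hW, map_add, map_add,
        map_add, h2, h12, coeff_C_mul, coeff_C_mul, coeff_DqI]
      simp only [I₀, coeff_mk]
      push_cast
      linear_combination hrec m
  have huinv : u⁻¹ * u = 1 := PowerSeries.inv_mul_cancel u hu0
  have hIinv : I₀ a k * (I₀ a k)⁻¹ = 1 := PowerSeries.mul_inv_cancel _ hI0
  have h4 : Dq^[4] (I₀ a k) = u⁻¹ * ((PowerSeries.C r * PowerSeries.X) * W) := by
    rw [← E, ← mul_assoc, huinv, one_mul]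
  have hX : u⁻¹ * (PowerSeries.C r * PowerSeries.X) = -(Xser a k) := by
    have h1 : (PowerSeries.C r * PowerSeries.X : ℚ⟦X⟧) = 1 - u := by rw [hu]; ring
    rw [h1, mul_sub, mul_one, huinv]
    have : Xser a k = 1 - u⁻¹ := by rw [Xser, Yser, ← hr, ← hu]
    rw [this]; ring
  show Dq^[4] (I₀ a k) * (I₀ a k)⁻¹ = _
  rw [h4, Bgen, Bgen, Bgen, ← hX, hW]
  linear_combination (u⁻¹ * (PowerSeries.C r * PowerSeries.X) * PowerSeries.C r₁) * hIinv

lemma hrec1 (m : ℕ) : ((m : ℚ) + 1) ^ 4 * cCoef ![1,1,1,1,2] 6 (m + 1) =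
    rConst ![1,1,1,1,2] 6 * cCoef ![1,1,1,1,2] 6 m *
      ((m : ℚ) ^ 4 + 2 * (m : ℚ) ^ 3 + (1 + 13/36) * (m : ℚ) ^ 2 + 13/36 * m + 5/162) := by
  have f6 := fact_step (6*m) 6
  have f2 := fact_step (2*m) 2
  have f1 := fact_step m 1
  simp only [Finset.prod_range_succ, Finset.prod_range_zero, one_mul] at f6 f2 f1
  have e6 : 6 * (m+1) = 6*m + 6 := by ring
  have e2 : 2 * (m+1) = 2*m + 2 := by ring
  have nz : ∀ j : ℕ, (Nat.factorial j : ℚ) ≠ 0 := fun j =>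
    Nat.cast_ne_zero.mpr (Nat.factorial_ne_zero j)
  simp only [cCoef, rConst, Fin.prod_univ_five, Matrix.cons_val_zero, Matrix.cons_val_one,
    Matrix.head_cons, Matrix.cons_val_two, Matrix.tail_cons, Matrix.cons_val_three,
    Matrix.cons_val_four, Matrix.head_fin_const, one_mul, e6, e2, f6, f2, f1]
  push_cast
  field_simp
  ring

lemma hrec2 (m : ℕ) : ((m : ℚ) + 1) ^ 4 * cCoef ![1,1,1,1,4] 8 (m + 1) =
    rConst ![1,1,1,1,4] 8 * cCoef ![1,1,1,1,4] 8 m *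
      ((m : ℚ) ^ 4 + 2 * (m : ℚ) ^ 3 + (1 + 11/32) * (m : ℚ) ^ 2 + 11/32 * m + 105/4096) := by
  have f8 := fact_step (8*m) 8
  have f4 := fact_step (4*m) 4
  have f1 := fact_step m 1
  simp only [Finset.prod_range_succ, Finset.prod_range_zero, one_mul] at f8 f4 f1
  have e8 : 8 * (m+1) = 8*m + 8 := by ring
  have e4 : 4 * (m+1) = 4*m + 4 := by ring
  have nz : ∀ j : ℕ, (Nat.factorial j : ℚ) ≠ 0 := fun j =>
    Nat.cast_ne_zero.mpr (Nat.factorial_ne_zero j)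
  simp only [cCoef, rConst, Fin.prod_univ_five, Matrix.cons_val_zero, Matrix.cons_val_one,
    Matrix.head_cons, Matrix.cons_val_two, Matrix.tail_cons, Matrix.cons_val_three,
    Matrix.cons_val_four, Matrix.head_fin_const, one_mul, e8, e4, f8, f4, f1]
  push_cast
  field_simp
  ring

lemma hrec3 (m : ℕ) : ((m : ℚ) + 1) ^ 4 * cCoef ![1,1,1,2,5] 10 (m + 1) =
    rConst ![1,1,1,2,5] 10 * cCoef ![1,1,1,2,5] 10 m *
      ((m : ℚ) ^ 4 + 2 * (m : ℚ) ^ 3 + (1 + 3/10) * (m : ℚ) ^ 2 + 3/10 * m + 189/10000) := by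
  have f10 := fact_step (10*m) 10
  have f5 := fact_step (5*m) 5
  have f2 := fact_step (2*m) 2
  have f1 := fact_step m 1
  simp only [Finset.prod_range_succ, Finset.prod_range_zero, one_mul] at f10 f5 f2 f1
  have e10 : 10 * (m+1) = 10*m + 10 := by ring
  have e5 : 5 * (m+1) = 5*m + 5 := by ring
  have e2 : 2 * (m+1) = 2*m + 2 := by ring
  have nz : ∀ j : ℕ, (Nat.factorial j : ℚ) ≠ 0 := fun j =>
    Nat.cast_ne_zero.mpr (Nat.factorial_ne_zero j)
  simp only [cCoef, rConst, Fin.prod_univ_five, Matrix.cons_val_zero, Matrix.cons_val_one,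
    Matrix.head_cons, Matrix.cons_val_two, Matrix.tail_cons, Matrix.cons_val_three,
    Matrix.cons_val_four, Matrix.head_fin_const, one_mul, e10, e5, e2, f10, f5, f2, f1]
  push_cast
  field_simp
  ring

/-- `B₄ = −X(2B₃ + (1 + r₀)B₂ + r₀·B + r₁)` in `ℚ⟦q⟧`. -/
theorem statement_2 (a : Fin 5 → ℕ) (k : ℕ) (r₀ r₁ : ℚ)
    (h : (a = ![1, 1, 1, 1, 2] ∧ k = 6 ∧ r₀ = 13 / 36 ∧ r₁ = 5 / 162) ∨
         (a = ![1, 1, 1, 1, 4] ∧ k = 8 ∧ r₀ = 11 / 32 ∧ r₁ = 105 / 4096) ∨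
         (a = ![1, 1, 1, 2, 5] ∧ k = 10 ∧ r₀ = 3 / 10 ∧ r₁ = 189 / 10000)) :
    Bgen a k 4 =
      -(Xser a k) * (2 * Bgen a k 3 + (1 + PowerSeries.C r₀) * Bgen a k 2 +
        PowerSeries.C r₀ * Bgen a k 1 + PowerSeries.C r₁) := by
  rcases h with ⟨ha, hk, h0, h1⟩ | ⟨ha, hk, h0, h1⟩ | ⟨ha, hk, h0, h1⟩ <;>
    subst ha hk h0 h1
  · exact master _ _ _ _ hrec1
  · exact master _ _ _ _ hrec2
  · exact master _ _ _ _ hrec3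

end
end

section
/- Let R be a commutative ring, z a polynomial variable, and let N^G(z) denote the 4×4 strictly upper triangular matrix over R[z] with first row (0, z·E^G_ψ, z^2·E^G_{φψ}, z^3·E^G_{1ψ²}), second row (0, 0, z·E^G_{φφ}, z^2·E^G_{1φψ}), third row (0, 0, 0, z·E^G_ψ), and fourth row zero; let N(z) be the corresponding matrix built from the ungauged propagators (the case c_{11} = c_{12} = c_2 = c_3 = 0). Then (I − N^G(z)) = (I − N(z))·(I − G(z)), where G(z) is the strictly upper triangular matrix with first row (0, z·c_{11}, z^2·c_2, −z^3(c_{11}c_2 + c_3)), second row (0, 0, z·c_{12}, −z^2(c_{11}c_{12} + c_2)), third row (0, 0, 0, z·c_{11}), and fourth row zero. -/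
open Polynomial Matrix

noncomputable section

set_option maxHeartbeats 1600000

/-- the gauged upper-triangular matrix factors as
`(I − N^G(z)) = (I − N(z))·(I − G(z))`. -/
theorem statement_9 {R : Type*} [CommRing R] (Eψ Eφφ Eφψ Eψψ c₁₁ c₁₂ c₂ c₃ : R) :
    -- gauged propagators
    let EψG : R := Eψ + c₁₁
    let EφφG : R := Eφφ + c₁₂
    let EφψG : R := Eφψ - c₁₂ * Eψ + c₂
    let EψψG : R := Eψψ + c₁₂ * Eψ ^ 2 - 2 * c₂ * Eψ + c₃
    let E1φψG : R := -EψG * EφφG - EφψG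
    let E1ψ2G : R := -EψG * EφψG - EψψG
    -- ungauged propagators (the case c₁₁ = c₁₂ = c₂ = c₃ = 0)
    let E1φψ : R := -Eψ * Eφφ - Eφψ
    let E1ψ2 : R := -Eψ * Eφψ - Eψψ
    let z : R[X] := Polynomial.X
    let NG : Matrix (Fin 4) (Fin 4) R[X] :=
      !![0, z * Polynomial.C EψG, z ^ 2 * Polynomial.C EφψG, z ^ 3 * Polynomial.C E1ψ2G;
         0, 0, z * Polynomial.C EφφG, z ^ 2 * Polynomial.C E1φψG;
         0, 0, 0, z * Polynomial.C EψG;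
         0, 0, 0, 0]
    let N : Matrix (Fin 4) (Fin 4) R[X] :=
      !![0, z * Polynomial.C Eψ, z ^ 2 * Polynomial.C Eφψ, z ^ 3 * Polynomial.C E1ψ2;
         0, 0, z * Polynomial.C Eφφ, z ^ 2 * Polynomial.C E1φψ;
         0, 0, 0, z * Polynomial.C Eψ;
         0, 0, 0, 0]
    let G : Matrix (Fin 4) (Fin 4) R[X] :=
      !![0, z * Polynomial.C c₁₁, z ^ 2 * Polynomial.C c₂,
           -(z ^ 3 * Polynomial.C (c₁₁ * c₂ + c₃));
         0, 0, z * Polynomial.C c₁₂, -(z ^ 2 * Polynomial.C (c₁₁ * c₁₂ + c₂));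
         0, 0, 0, z * Polynomial.C c₁₁;
         0, 0, 0, 0]
    (1 - NG) = (1 - N) * (1 - G) := by
  intro EψG EφφG EφψG EψψG E1φψG E1ψ2G E1φψ E1ψ2 z NG N G
  refine Matrix.ext fun i j => ?_
  fin_cases i <;> fin_cases j <;>
    simp only [NG, N, G, EψG, EφφG, EφψG, EψψG, E1φψG, E1ψ2G, E1φψ, E1ψ2, z,
      Matrix.sub_apply, Matrix.mul_apply, Fin.sum_univ_four, Matrix.one_apply,
      Matrix.cons_val', Matrix.cons_val_zero, Matrix.cons_val_one, Matrix.head_cons,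
      Matrix.empty_val', Matrix.cons_val_fin_one, Matrix.head_fin_const,
      Matrix.cons_val_two, Matrix.tail_cons, Matrix.cons_val_three, Matrix.head_cons,
      Fin.isValue, map_add, map_sub, _root_.map_mul, map_ofNat] <;>
    simp (config := { decide := true }) [Matrix.vecHead, Matrix.vecTail] <;> ring

end
end

section
/- In each of the three cases, the Q-subalgebra Q[𝓔_1, 𝓔_2, 𝓔_3, X] of Q[[q]] generated by the modified generators 𝓔_1, 𝓔_2, 𝓔_3 and X is closed under the derivation D = q·d/dq. -/
open PowerSeries Finset

noncomputable section

/-- The propagator `E_ψ = B₁`. -/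
def Eψprop (a : Fin 5 → ℕ) (k : ℕ) : ℚ⟦X⟧ := Bgen a k 1

/-- The propagator `E_φφ = A₁ + 2B₁`. -/
def Eφφprop (a : Fin 5 → ℕ) (k : ℕ) : ℚ⟦X⟧ := Agen a k 1 + 2 * Bgen a k 1

/-- The propagator `E_φψ = −B₂`. -/
def Eφψprop (a : Fin 5 → ℕ) (k : ℕ) : ℚ⟦X⟧ := -Bgen a k 2

/-- The propagator `E_ψψ = −B₃ + (B₁ − X)B₂ − r₀·B₁·X`. -/
def Eψψprop (a : Fin 5 → ℕ) (k : ℕ) (r₀ : ℚ) : ℚ⟦X⟧ :=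
  -Bgen a k 3 + (Bgen a k 1 - Xser a k) * Bgen a k 2 -
    PowerSeries.C r₀ * Bgen a k 1 * Xser a k

/-- The modified generator `𝓔₁ = E_φφ`. -/
def calE₁ (a : Fin 5 → ℕ) (k : ℕ) : ℚ⟦X⟧ := Eφφprop a k

/-- The modified generator `𝓔₂ = E_ψ·E_φφ + E_φψ`. -/
def calE₂ (a : Fin 5 → ℕ) (k : ℕ) : ℚ⟦X⟧ := Eψprop a k * Eφφprop a k + Eφψprop a k

/-- The modified generator `𝓔₃ = E_ψ²·E_φφ + 2E_ψ·E_φψ + E_ψψ`. -/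
def calE₃ (a : Fin 5 → ℕ) (k : ℕ) (r₀ : ℚ) : ℚ⟦X⟧ :=
  Eψprop a k ^ 2 * Eφφprop a k + 2 * Eψprop a k * Eφψprop a k + Eψψprop a k r₀

namespace S14

lemma coeff_Dq (f : ℚ⟦X⟧) (n : ℕ) : coeff n (Dq f) = n * coeff n f := by
  cases n with
  | zero => simp [Dq, coeff_zero_eq_constantCoeff, map_mul]
  | succ d => rw [Dq, coeff_succ_X_mul, show f.derivativeFun = derivative ℚ f from rfl, coeff_derivativeFun]; push_cast; ring

lemma Dq_add (f g : ℚ⟦X⟧) : Dq (f + g) = Dq f + Dq g := by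
  unfold Dq; rw [derivativeFun_add, mul_add]

lemma Dq_mul (f g : ℚ⟦X⟧) : Dq (f * g) = f * Dq g + g * Dq f := by
  unfold Dq; rw [derivativeFun_mul, mul_add, smul_eq_mul, smul_eq_mul]; ring

lemma Dq_C (r : ℚ) : Dq (C r) = 0 := by unfold Dq; rw [show (C r).derivativeFun = derivative ℚ (C r) from rfl, derivativeFun_C, mul_zero]

lemma Dq_one : Dq (1 : ℚ⟦X⟧) = 0 := by rw [← map_one (C (R := ℚ)), Dq_C]

lemma Dq_ofNat (n : ℕ) [n.AtLeastTwo] : Dq (no_index (OfNat.ofNat n) : ℚ⟦X⟧) = 0 := by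
  rw [← map_ofNat (C (R := ℚ)) n, Dq_C]

lemma Dq_zero : Dq (0 : ℚ⟦X⟧) = 0 := by simpa using Dq_C 0

lemma Dq_neg (f : ℚ⟦X⟧) : Dq (-f) = -Dq f := by
  have h := Dq_add f (-f)
  rw [add_neg_cancel, Dq_zero] at h
  linear_combination -h

lemma Dq_sub (f g : ℚ⟦X⟧) : Dq (f - g) = Dq f - Dq g := by
  rw [sub_eq_add_neg, Dq_add, Dq_neg, sub_eq_add_neg]

lemma Dq_eq_C (f : ℚ⟦X⟧) (h : Dq f = 0) : f = C (constantCoeff f) := by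
  ext n
  cases n with
  | zero => simp [coeff_zero_eq_constantCoeff]
  | succ d =>
    have h2 := coeff_Dq f (d+1)
    rw [h, map_zero] at h2
    have : coeff (d+1) f = 0 := by
      replace h2 := mul_eq_zero.mp h2.symm
      rcases h2 with h2 | h2
      · exact absurd h2 (by positivity)
      · exact h2
    rw [this, coeff_C]; simp

lemma constantCoeff_Dq (f : ℚ⟦X⟧) : constantCoeff (Dq f) = 0 := by
  rw [← coeff_zero_eq_constantCoeff, coeff_Dq]; simp

lemma Dq_inv (f : ℚ⟦X⟧) (h : constantCoeff f ≠ 0) :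
    Dq f⁻¹ = -(Dq f * (f⁻¹ * f⁻¹)) := by
  have h1 : f * f⁻¹ = 1 := PowerSeries.mul_inv_cancel f h
  have h2 := congrArg Dq h1
  rw [Dq_mul, Dq_one] at h2
  have hf : f ≠ 0 := fun hf => h (by rw [hf]; simp)
  apply mul_left_cancel₀ hf
  linear_combination h2 + Dq f * f⁻¹ * h1




lemma cast_factorial_add (n j : ℕ) :
    (((n + j).factorial : ℕ) : ℚ) = (n.factorial : ℚ) * ∏ i ∈ Finset.range j, ((n : ℚ) + i + 1) := by
  induction j with
  | zero => simp
  | succ m ih =>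
    rw [← Nat.add_assoc, Nat.factorial_succ, Finset.prod_range_succ]
    push_cast
    rw [ih]
    ring

lemma harm_add (n j : ℕ) :
    harm (n + j) = harm n + ∑ i ∈ Finset.range j, 1 / ((n : ℚ) + i + 1) := by
  induction j with
  | zero => simp
  | succ m ih =>
    rw [← Nat.add_assoc]
    unfold harm
    rw [Finset.sum_range_succ, Finset.sum_range_succ (fun i => 1 / ((n:ℚ) + i + 1))]
    unfold harm at ih
    rw [ih]
    push_cast
    ring

lemma cCoef6 (d : ℕ) : cCoef ![1,1,1,1,2] 6 d
    = ((6*d).factorial : ℚ) / ((d.factorial : ℚ)^4 * ((2*d).factorial : ℚ)) := by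
  unfold cCoef
  rw [Fin.prod_univ_five]
  simp only [Matrix.cons_val_zero, Matrix.cons_val_one, Matrix.head_cons, Matrix.cons_val_two,
    Matrix.tail_cons, Matrix.cons_val_three, Matrix.cons_val_four, Matrix.head_fin_const]
  rw [one_mul]
  ring

lemma sCoef6 (d : ℕ) : sCoef ![1,1,1,1,2] 6 d = 6 * harm (6*d) - (4*harm d + 2*harm (2*d)) := by
  unfold sCoef
  rw [Fin.sum_univ_five]
  simp only [Matrix.cons_val_zero, Matrix.cons_val_one, Matrix.head_cons, Matrix.cons_val_two,
    Matrix.tail_cons, Matrix.cons_val_three, Matrix.cons_val_four, Matrix.head_fin_const]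
  rw [one_mul]
  push_cast
  ring

lemma rConst6 : rConst ![1,1,1,1,2] 6 = 11664 := by
  unfold rConst
  rw [Fin.prod_univ_five]
  simp only [Matrix.cons_val_zero, Matrix.cons_val_one, Matrix.head_cons, Matrix.cons_val_two,
    Matrix.tail_cons, Matrix.cons_val_three, Matrix.cons_val_four, Matrix.head_fin_const]
  norm_num

lemma HC6 : ∀ d : ℕ, ((d:ℚ)+1)^4 * cCoef ![1,1,1,1,2] 6 (d+1)
    = rConst ![1,1,1,1,2] 6 * (((d:ℚ)^4 + 2*(d:ℚ)^3 + (13/36+1)*(d:ℚ)^2 + (13/36)*(d:ℚ) + 5/162) * cCoef ![1,1,1,1,2] 6 d) := by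
  intro d
  rw [cCoef6, cCoef6, rConst6]
  rw [show 6*(d+1) = 6*d + 6 by ring, show 2*(d+1) = 2*d + 2 by ring,
    show d + 1 = d + 1 from rfl]
  rw [cast_factorial_add (6*d) 6, cast_factorial_add (2*d) 2, cast_factorial_add d 1]
  simp only [Finset.prod_range_succ, Finset.prod_range_zero, one_mul]
  have f1 : ((d.factorial : ℕ) : ℚ) ≠ 0 := Nat.cast_ne_zero.mpr d.factorial_ne_zero
  have f2 : (((2*d).factorial : ℕ) : ℚ) ≠ 0 := Nat.cast_ne_zero.mpr (2*d).factorial_ne_zero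
  have g1 : ((d:ℚ)+1) ≠ 0 := by positivity
  have g2 : ((2*d : ℕ):ℚ) + 0 + 1 ≠ 0 := by positivity
  have g3 : ((2*d : ℕ):ℚ) + 1 + 1 ≠ 0 := by positivity
  push_cast
  field_simp
  ring

lemma hs6 : ∀ d : ℕ,
    (11664 * (((d:ℚ)+1) * ((d:ℚ)^4 + 2*(d:ℚ)^3 + (13/36+1)*(d:ℚ)^2 + (13/36)*(d:ℚ) + 5/162)))
      * (sCoef ![1,1,1,1,2] 6 (d+1) - sCoef ![1,1,1,1,2] 6 d)
    = 11664 * (((d:ℚ)+1) * (4*(d:ℚ)^3 + 6*(d:ℚ)^2 + 2*(13/36+1)*(d:ℚ) + 13/36))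
      - 4 * (11664 * ((d:ℚ)^4 + 2*(d:ℚ)^3 + (13/36+1)*(d:ℚ)^2 + (13/36)*(d:ℚ) + 5/162)) := by
  intro d
  rw [sCoef6, sCoef6]
  rw [show 6*(d+1) = 6*d + 6 by ring, show 2*(d+1) = 2*d + 2 by ring]
  rw [harm_add (6*d) 6, harm_add (2*d) 2, harm_add d 1]
  simp only [Finset.sum_range_succ, Finset.sum_range_zero]
  have g1 : ((d:ℚ)+1) ≠ 0 := by positivity
  have h1 : (6*(d:ℚ) + 1) ≠ 0 := by positivity
  have h2 : (6*(d:ℚ) + 2) ≠ 0 := by positivity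
  have h3 : (6*(d:ℚ) + 3) ≠ 0 := by positivity
  have h4 : (6*(d:ℚ) + 4) ≠ 0 := by positivity
  have h5 : (6*(d:ℚ) + 5) ≠ 0 := by positivity
  have h6 : (6*(d:ℚ) + 6) ≠ 0 := by positivity
  have h7 : (2*(d:ℚ) + 1) ≠ 0 := by positivity
  have h8 : (2*(d:ℚ) + 2) ≠ 0 := by positivity
  push_cast
  field_simp
  ring




lemma HS6 : ∀ d : ℕ, ((d:ℚ)+1)^5 * (cCoef ![1,1,1,1,2] 6 (d+1) * sCoef ![1,1,1,1,2] 6 (d+1))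
      + 4*((d:ℚ)+1)^4 * cCoef ![1,1,1,1,2] 6 (d+1)
    = rConst ![1,1,1,1,2] 6 * ((((d:ℚ)+1) * ((d:ℚ)^4 + 2*(d:ℚ)^3 + (13/36+1)*(d:ℚ)^2 + (13/36)*(d:ℚ) + 5/162)) * (cCoef ![1,1,1,1,2] 6 d * sCoef ![1,1,1,1,2] 6 d)
      + (((d:ℚ)+1) * (4*(d:ℚ)^3 + 6*(d:ℚ)^2 + 2*(13/36+1)*(d:ℚ) + 13/36)) * cCoef ![1,1,1,1,2] 6 d) := by
  intro d
  have h1 := HC6 d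
  have h2 := hs6 d
  rw [rConst6] at h1 ⊢
  linear_combination (((d:ℚ)+1) * sCoef ![1,1,1,1,2] 6 (d+1) + 4) * h1
    + cCoef ![1,1,1,1,2] 6 d * h2

lemma cCoef8 (d : ℕ) : cCoef ![1,1,1,1,4] 8 d
    = ((8*d).factorial : ℚ) / ((d.factorial : ℚ)^4 * ((4*d).factorial : ℚ)) := by
  unfold cCoef
  rw [Fin.prod_univ_five]
  simp only [Matrix.cons_val_zero, Matrix.cons_val_one, Matrix.head_cons, Matrix.cons_val_two,
    Matrix.tail_cons, Matrix.cons_val_three, Matrix.cons_val_four, Matrix.head_fin_const]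
  rw [one_mul]
  ring

lemma sCoef8 (d : ℕ) : sCoef ![1,1,1,1,4] 8 d = 8 * harm (8*d) - (4*harm d + 4*harm (4*d)) := by
  unfold sCoef
  rw [Fin.sum_univ_five]
  simp only [Matrix.cons_val_zero, Matrix.cons_val_one, Matrix.head_cons, Matrix.cons_val_two,
    Matrix.tail_cons, Matrix.cons_val_three, Matrix.cons_val_four, Matrix.head_fin_const]
  rw [one_mul]
  push_cast
  ring

lemma rConst8 : rConst ![1,1,1,1,4] 8 = 65536 := by
  unfold rConst
  rw [Fin.prod_univ_five]
  simp only [Matrix.cons_val_zero, Matrix.cons_val_one, Matrix.head_cons, Matrix.cons_val_two,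
    Matrix.tail_cons, Matrix.cons_val_three, Matrix.cons_val_four, Matrix.head_fin_const]
  norm_num

set_option maxHeartbeats 4000000 in
lemma HC8 : ∀ d : ℕ, ((d:ℚ)+1)^4 * cCoef ![1,1,1,1,4] 8 (d+1)
    = rConst ![1,1,1,1,4] 8 * (((d:ℚ)^4 + 2*(d:ℚ)^3 + (11/32+1)*(d:ℚ)^2 + (11/32)*(d:ℚ) + 105/4096) * cCoef ![1,1,1,1,4] 8 d) := by
  intro d
  rw [cCoef8, cCoef8, rConst8]
  rw [show 8*(d+1) = 8*d + 8 by ring, show 4*(d+1) = 4*d + 4 by ring,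
    show d + 1 = d + 1 from rfl]
  rw [cast_factorial_add (8*d) 8, cast_factorial_add (4*d) 4, cast_factorial_add d 1]
  simp only [Finset.prod_range_succ, Finset.prod_range_zero, one_mul]
  have f1 : ((d.factorial : ℕ) : ℚ) ≠ 0 := Nat.cast_ne_zero.mpr d.factorial_ne_zero
  have f2 : (((4*d).factorial : ℕ) : ℚ) ≠ 0 := Nat.cast_ne_zero.mpr (4*d).factorial_ne_zero
  have g1 : ((d:ℚ)+1) ≠ 0 := by positivity
  have g2 : ((4*d : ℕ):ℚ) + 0 + 1 ≠ 0 := by positivity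
  have g3 : ((4*d : ℕ):ℚ) + 1 + 1 ≠ 0 := by positivity
  have g4 : ((4*d : ℕ):ℚ) + 2 + 1 ≠ 0 := by positivity
  have g5 : ((4*d : ℕ):ℚ) + 3 + 1 ≠ 0 := by positivity
  push_cast
  field_simp
  ring

set_option maxHeartbeats 4000000 in
lemma hs8 : ∀ d : ℕ,
    (65536 * (((d:ℚ)+1) * ((d:ℚ)^4 + 2*(d:ℚ)^3 + (11/32+1)*(d:ℚ)^2 + (11/32)*(d:ℚ) + 105/4096)))
      * (sCoef ![1,1,1,1,4] 8 (d+1) - sCoef ![1,1,1,1,4] 8 d)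
    = 65536 * (((d:ℚ)+1) * (4*(d:ℚ)^3 + 6*(d:ℚ)^2 + 2*(11/32+1)*(d:ℚ) + 11/32))
      - 4 * (65536 * ((d:ℚ)^4 + 2*(d:ℚ)^3 + (11/32+1)*(d:ℚ)^2 + (11/32)*(d:ℚ) + 105/4096)) := by
  intro d
  rw [sCoef8, sCoef8]
  rw [show 8*(d+1) = 8*d + 8 by ring, show 4*(d+1) = 4*d + 4 by ring]
  rw [harm_add (8*d) 8, harm_add (4*d) 4, harm_add d 1]
  simp only [Finset.sum_range_succ, Finset.sum_range_zero]
  have g1 : ((d:ℚ)+1) ≠ 0 := by positivity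
  have h1 : (8*(d:ℚ) + 1) ≠ 0 := by positivity
  have h2 : (8*(d:ℚ) + 2) ≠ 0 := by positivity
  have h3 : (8*(d:ℚ) + 3) ≠ 0 := by positivity
  have h4 : (8*(d:ℚ) + 4) ≠ 0 := by positivity
  have h5 : (8*(d:ℚ) + 5) ≠ 0 := by positivity
  have h6 : (8*(d:ℚ) + 6) ≠ 0 := by positivity
  have h7 : (8*(d:ℚ) + 7) ≠ 0 := by positivity
  have h8 : (8*(d:ℚ) + 8) ≠ 0 := by positivity
  have j1 : (4*(d:ℚ) + 1) ≠ 0 := by positivity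
  have j2 : (4*(d:ℚ) + 2) ≠ 0 := by positivity
  have j3 : (4*(d:ℚ) + 3) ≠ 0 := by positivity
  have j4 : (4*(d:ℚ) + 4) ≠ 0 := by positivity
  push_cast
  field_simp
  ring

lemma HS8 : ∀ d : ℕ, ((d:ℚ)+1)^5 * (cCoef ![1,1,1,1,4] 8 (d+1) * sCoef ![1,1,1,1,4] 8 (d+1))
      + 4*((d:ℚ)+1)^4 * cCoef ![1,1,1,1,4] 8 (d+1)
    = rConst ![1,1,1,1,4] 8 * ((((d:ℚ)+1) * ((d:ℚ)^4 + 2*(d:ℚ)^3 + (11/32+1)*(d:ℚ)^2 + (11/32)*(d:ℚ) + 105/4096)) * (cCoef ![1,1,1,1,4] 8 d * sCoef ![1,1,1,1,4] 8 d)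
      + (((d:ℚ)+1) * (4*(d:ℚ)^3 + 6*(d:ℚ)^2 + 2*(11/32+1)*(d:ℚ) + 11/32)) * cCoef ![1,1,1,1,4] 8 d) := by
  intro d
  have h1 := HC8 d
  have h2 := hs8 d
  rw [rConst8] at h1 ⊢
  linear_combination (((d:ℚ)+1) * sCoef ![1,1,1,1,4] 8 (d+1) + 4) * h1
    + cCoef ![1,1,1,1,4] 8 d * h2

lemma cCoef10 (d : ℕ) : cCoef ![1,1,1,2,5] 10 d
    = ((10*d).factorial : ℚ) / ((d.factorial : ℚ)^3 * ((2*d).factorial : ℚ) * ((5*d).factorial : ℚ)) := by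
  unfold cCoef
  rw [Fin.prod_univ_five]
  simp only [Matrix.cons_val_zero, Matrix.cons_val_one, Matrix.head_cons, Matrix.cons_val_two,
    Matrix.tail_cons, Matrix.cons_val_three, Matrix.cons_val_four, Matrix.head_fin_const]
  rw [one_mul]
  ring

lemma sCoef10 (d : ℕ) : sCoef ![1,1,1,2,5] 10 d
    = 10 * harm (10*d) - (3*harm d + 2*harm (2*d) + 5*harm (5*d)) := by
  unfold sCoef
  rw [Fin.sum_univ_five]
  simp only [Matrix.cons_val_zero, Matrix.cons_val_one, Matrix.head_cons, Matrix.cons_val_two,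
    Matrix.tail_cons, Matrix.cons_val_three, Matrix.cons_val_four, Matrix.head_fin_const]
  rw [one_mul]
  push_cast
  ring

lemma rConst10 : rConst ![1,1,1,2,5] 10 = 800000 := by
  unfold rConst
  rw [Fin.prod_univ_five]
  simp only [Matrix.cons_val_zero, Matrix.cons_val_one, Matrix.head_cons, Matrix.cons_val_two,
    Matrix.tail_cons, Matrix.cons_val_three, Matrix.cons_val_four, Matrix.head_fin_const]
  norm_num

set_option maxHeartbeats 4000000 in
lemma HC10 : ∀ d : ℕ, ((d:ℚ)+1)^4 * cCoef ![1,1,1,2,5] 10 (d+1)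
    = rConst ![1,1,1,2,5] 10 * (((d:ℚ)^4 + 2*(d:ℚ)^3 + (3/10+1)*(d:ℚ)^2 + (3/10)*(d:ℚ) + 189/10000) * cCoef ![1,1,1,2,5] 10 d) := by
  intro d
  rw [cCoef10, cCoef10, rConst10]
  rw [show 10*(d+1) = 10*d + 10 by ring, show 2*(d+1) = 2*d + 2 by ring,
    show 5*(d+1) = 5*d + 5 by ring, show d + 1 = d + 1 from rfl]
  rw [cast_factorial_add (10*d) 10, cast_factorial_add (2*d) 2, cast_factorial_add (5*d) 5,
    cast_factorial_add d 1]
  simp only [Finset.prod_range_succ, Finset.prod_range_zero, one_mul]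
  have f1 : ((d.factorial : ℕ) : ℚ) ≠ 0 := Nat.cast_ne_zero.mpr d.factorial_ne_zero
  have f2 : (((2*d).factorial : ℕ) : ℚ) ≠ 0 := Nat.cast_ne_zero.mpr (2*d).factorial_ne_zero
  have f3 : (((5*d).factorial : ℕ) : ℚ) ≠ 0 := Nat.cast_ne_zero.mpr (5*d).factorial_ne_zero
  have g1 : ((d:ℚ)+1) ≠ 0 := by positivity
  have g2 : ((2*d : ℕ):ℚ) + 0 + 1 ≠ 0 := by positivity
  have g3 : ((2*d : ℕ):ℚ) + 1 + 1 ≠ 0 := by positivity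
  have g4 : ((5*d : ℕ):ℚ) + 0 + 1 ≠ 0 := by positivity
  have g5 : ((5*d : ℕ):ℚ) + 1 + 1 ≠ 0 := by positivity
  have g6 : ((5*d : ℕ):ℚ) + 2 + 1 ≠ 0 := by positivity
  have g7 : ((5*d : ℕ):ℚ) + 3 + 1 ≠ 0 := by positivity
  have g8 : ((5*d : ℕ):ℚ) + 4 + 1 ≠ 0 := by positivity
  push_cast
  field_simp
  ring

set_option maxHeartbeats 4000000 in
lemma hs10 : ∀ d : ℕ,
    (800000 * (((d:ℚ)+1) * ((d:ℚ)^4 + 2*(d:ℚ)^3 + (3/10+1)*(d:ℚ)^2 + (3/10)*(d:ℚ) + 189/10000)))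
      * (sCoef ![1,1,1,2,5] 10 (d+1) - sCoef ![1,1,1,2,5] 10 d)
    = 800000 * (((d:ℚ)+1) * (4*(d:ℚ)^3 + 6*(d:ℚ)^2 + 2*(3/10+1)*(d:ℚ) + 3/10))
      - 4 * (800000 * ((d:ℚ)^4 + 2*(d:ℚ)^3 + (3/10+1)*(d:ℚ)^2 + (3/10)*(d:ℚ) + 189/10000)) := by
  intro d
  rw [sCoef10, sCoef10]
  rw [show 10*(d+1) = 10*d + 10 by ring, show 2*(d+1) = 2*d + 2 by ring,
    show 5*(d+1) = 5*d + 5 by ring]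
  rw [harm_add (10*d) 10, harm_add (2*d) 2, harm_add (5*d) 5, harm_add d 1]
  simp only [Finset.sum_range_succ, Finset.sum_range_zero]
  have g1 : ((d:ℚ)+1) ≠ 0 := by positivity
  have h1 : (10*(d:ℚ) + 1) ≠ 0 := by positivity
  have h2 : (10*(d:ℚ) + 2) ≠ 0 := by positivity
  have h3 : (10*(d:ℚ) + 3) ≠ 0 := by positivity
  have h4 : (10*(d:ℚ) + 4) ≠ 0 := by positivity
  have h5 : (10*(d:ℚ) + 5) ≠ 0 := by positivity
  have h6 : (10*(d:ℚ) + 6) ≠ 0 := by positivity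
  have h7 : (10*(d:ℚ) + 7) ≠ 0 := by positivity
  have h8 : (10*(d:ℚ) + 8) ≠ 0 := by positivity
  have h9 : (10*(d:ℚ) + 9) ≠ 0 := by positivity
  have h10 : (10*(d:ℚ) + 10) ≠ 0 := by positivity
  have j1 : (2*(d:ℚ) + 1) ≠ 0 := by positivity
  have j2 : (2*(d:ℚ) + 2) ≠ 0 := by positivity
  have l1 : (5*(d:ℚ) + 1) ≠ 0 := by positivity
  have l2 : (5*(d:ℚ) + 2) ≠ 0 := by positivity
  have l3 : (5*(d:ℚ) + 3) ≠ 0 := by positivity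
  have l4 : (5*(d:ℚ) + 4) ≠ 0 := by positivity
  have l5 : (5*(d:ℚ) + 5) ≠ 0 := by positivity
  push_cast
  field_simp
  ring

lemma HS10 : ∀ d : ℕ, ((d:ℚ)+1)^5 * (cCoef ![1,1,1,2,5] 10 (d+1) * sCoef ![1,1,1,2,5] 10 (d+1))
      + 4*((d:ℚ)+1)^4 * cCoef ![1,1,1,2,5] 10 (d+1)
    = rConst ![1,1,1,2,5] 10 * ((((d:ℚ)+1) * ((d:ℚ)^4 + 2*(d:ℚ)^3 + (3/10+1)*(d:ℚ)^2 + (3/10)*(d:ℚ) + 189/10000)) * (cCoef ![1,1,1,2,5] 10 d * sCoef ![1,1,1,2,5] 10 d)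
      + (((d:ℚ)+1) * (4*(d:ℚ)^3 + 6*(d:ℚ)^2 + 2*(3/10+1)*(d:ℚ) + 3/10)) * cCoef ![1,1,1,2,5] 10 d) := by
  intro d
  have h1 := HC10 d
  have h2 := hs10 d
  rw [rConst10] at h1 ⊢
  linear_combination (((d:ℚ)+1) * sCoef ![1,1,1,2,5] 10 (d+1) + 4) * h1
    + cCoef ![1,1,1,2,5] 10 d * h2



theorem main (a : Fin 5 → ℕ) (k : ℕ) (r₀ σ₄ : ℚ)
    (HC : ∀ d : ℕ, ((d:ℚ)+1)^4 * cCoef a k (d+1)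
        = rConst a k * (((d:ℚ)^4 + 2*(d:ℚ)^3 + (r₀+1)*(d:ℚ)^2 + r₀*(d:ℚ) + σ₄) * cCoef a k d))
    (HS : ∀ d : ℕ, ((d:ℚ)+1)^5 * (cCoef a k (d+1) * sCoef a k (d+1))
          + 4*((d:ℚ)+1)^4 * cCoef a k (d+1)
        = rConst a k * ((((d:ℚ)+1) * ((d:ℚ)^4 + 2*(d:ℚ)^3 + (r₀+1)*(d:ℚ)^2 + r₀*(d:ℚ) + σ₄)) * (cCoef a k d * sCoef a k d)
          + (((d:ℚ)+1) * (4*(d:ℚ)^3 + 6*(d:ℚ)^2 + 2*(r₀+1)*(d:ℚ) + r₀)) * cCoef a k d)) :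
    ∀ f ∈ Algebra.adjoin ℚ
        ({calE₁ a k, calE₂ a k, calE₃ a k r₀, Xser a k} : Set ℚ⟦X⟧),
      Dq f ∈ Algebra.adjoin ℚ
        ({calE₁ a k, calE₂ a k, calE₃ a k r₀, Xser a k} : Set ℚ⟦X⟧) := by
  set zz : ℚ⟦X⟧ := C (rConst a k) * X with hzz
  set x0 : ℚ⟦X⟧ := I₀ a k with hx0
  set y0 : ℚ⟦X⟧ := I₁ a k with hy0
  set x1 : ℚ⟦X⟧ := Dq x0 with hx1
  set x2 : ℚ⟦X⟧ := Dq x1 with hx2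
  set x3 : ℚ⟦X⟧ := Dq x2 with hx3
  set x4 : ℚ⟦X⟧ := Dq x3 with hx4d
  set y1 : ℚ⟦X⟧ := Dq y0 with hy1
  set y2 : ℚ⟦X⟧ := Dq y1 with hy2
  set y3 : ℚ⟦X⟧ := Dq y2 with hy3
  set y4 : ℚ⟦X⟧ := Dq y3 with hy4d
  -- coefficient computations
  have cx0 : ∀ n : ℕ, coeff n x0 = cCoef a k n := by
    intro n; rw [hx0]; unfold I₀; exact coeff_mk n _
  have cy0 : ∀ n : ℕ, coeff n y0 = cCoef a k n * sCoef a k n := by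
    intro n; rw [hy0]; unfold I₁; exact coeff_mk n _
  have cx1 : ∀ n : ℕ, coeff n x1 = (n:ℚ) * cCoef a k n := by
    intro n; rw [hx1, coeff_Dq, cx0]
  have cx2 : ∀ n : ℕ, coeff n x2 = (n:ℚ)^2 * cCoef a k n := by
    intro n; rw [hx2, coeff_Dq, cx1]; ring
  have cx3 : ∀ n : ℕ, coeff n x3 = (n:ℚ)^3 * cCoef a k n := by
    intro n; rw [hx3, coeff_Dq, cx2]; ring
  have cx4 : ∀ n : ℕ, coeff n x4 = (n:ℚ)^4 * cCoef a k n := by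
    intro n; rw [hx4d, coeff_Dq, cx3]; ring
  have cy1 : ∀ n : ℕ, coeff n y1 = (n:ℚ) * (cCoef a k n * sCoef a k n) := by
    intro n; rw [hy1, coeff_Dq, cy0]
  have cy2 : ∀ n : ℕ, coeff n y2 = (n:ℚ)^2 * (cCoef a k n * sCoef a k n) := by
    intro n; rw [hy2, coeff_Dq, cy1]; ring
  have cy3 : ∀ n : ℕ, coeff n y3 = (n:ℚ)^3 * (cCoef a k n * sCoef a k n) := by
    intro n; rw [hy3, coeff_Dq, cy2]; ring
  have cy4 : ∀ n : ℕ, coeff n y4 = (n:ℚ)^4 * (cCoef a k n * sCoef a k n) := by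
    intro n; rw [hy4d, coeff_Dq, cy3]; ring
  have hcz : ∀ (g : ℚ⟦X⟧) (d : ℕ), coeff (d+1) (zz * g) = rConst a k * coeff d g := by
    intro g d; rw [hzz, mul_assoc, coeff_C_mul, coeff_succ_X_mul]
  have hcz0 : ∀ (g : ℚ⟦X⟧), coeff 0 (zz * g) = 0 := by
    intro g
    rw [hzz, mul_assoc, coeff_zero_eq_constantCoeff, map_mul, map_mul, constantCoeff_X]; ring
  -- Picard-Fuchs for I₀
  have hPhi0 : x4 - zz * x4
      = zz * (x3 + x3 + C r₀ * x2 + x2 + C r₀ * x1 + C σ₄ * x0) := by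
    ext n
    cases n with
    | zero =>
      rw [map_sub, hcz0, hcz0, cx4]
      push_cast; ring
    | succ d =>
      rw [map_sub, hcz, hcz, cx4, map_add, map_add, map_add, map_add, map_add,
        coeff_C_mul, coeff_C_mul, coeff_C_mul, cx4, cx3, cx2, cx1, cx0]
      push_cast
      linear_combination HC d
  -- Picard-Fuchs (inhomogeneous) for I₁
  have hPhi1 : (y4 - zz * y4) + ((x3 + x3 + x3 + x3) - zz * (x3 + x3 + x3 + x3))
      = zz * (y3 + y3 + C r₀ * y2 + y2 + C r₀ * y1 + C σ₄ * y0)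
        + zz * (x2 + x2 + x2 + x2 + x2 + x2 + C r₀ * x1 + C r₀ * x1 + x1 + x1 + C r₀ * x0) := by
    ext n
    cases n with
    | zero =>
      rw [map_add, map_add, map_sub, map_sub, hcz0, hcz0, hcz0, hcz0, cy4,
        map_add, map_add, map_add, cx3]
      push_cast; ring
    | succ d =>
      simp only [map_add, map_sub, hcz, coeff_C_mul, cx0, cx1, cx2, cx3, cx4, cy0, cy1, cy2,
        cy3, cy4]
      have hne : ((d:ℚ)+1) ≠ 0 := by positivity
      apply mul_left_cancel₀ hne
      push_cast
      linear_combination HS d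

  -- constant coefficient facts and units
  have hc00 : cCoef a k 0 = 1 := by
    unfold cCoef; simp
  have hccx0 : constantCoeff x0 = 1 := by
    rw [← coeff_zero_eq_constantCoeff, cx0, hc00]
  have hx0ne : constantCoeff x0 ≠ 0 := by rw [hccx0]; exact one_ne_zero
  set i0 : ℚ⟦X⟧ := x0⁻¹ with hi0d
  have hi0 : x0 * i0 = 1 := PowerSeries.mul_inv_cancel _ hx0ne
  set J : ℚ⟦X⟧ := I₁₁ a k with hJd
  have hJdef : J = 1 + Dq (y0 * i0) := by rw [hJd, hy0, hi0d, hx0]; rfl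
  have hccJ : constantCoeff J = 1 := by
    rw [hJdef, map_add, map_one, constantCoeff_Dq, add_zero]
  have hJne : constantCoeff J ≠ 0 := by rw [hccJ]; exact one_ne_zero
  set i1 : ℚ⟦X⟧ := J⁻¹ with hi1d
  have hi1 : J * i1 = 1 := PowerSeries.mul_inv_cancel _ hJne
  have hcc1z : constantCoeff (1 - zz) ≠ 0 := by
    rw [map_sub, map_one, hzz, map_mul, constantCoeff_X, mul_zero, sub_zero]
    exact one_ne_zero
  set iz : ℚ⟦X⟧ := Yser a k with hizd
  have hizdef : iz = (1 - zz)⁻¹ := by rw [hizd, hzz]; rfl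
  have hiz : (1 - zz) * iz = 1 := by
    rw [hizdef]; exact PowerSeries.mul_inv_cancel _ hcc1z
  set Xs : ℚ⟦X⟧ := Xser a k with hXsd
  have hXs : Xs = 1 - iz := by rw [hXsd, hizd]; rfl
  -- derivative facts
  have hDzz : Dq zz = zz := by
    ext n
    rw [coeff_Dq, hzz, coeff_C_mul, coeff_X]
    by_cases h1 : n = 1
    · subst h1; norm_num
    · simp [h1]
  have hDi0 : Dq i0 = -(x1 * (i0 * i0)) := by
    rw [hi0d, Dq_inv x0 hx0ne, ← hx1, ← hi0d]
  set au : ℚ⟦X⟧ := Dq J with haud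
  set av : ℚ⟦X⟧ := Dq au with havd
  have hDi1 : Dq i1 = -(au * (i1 * i1)) := by
    rw [hi1d, Dq_inv J hJne, ← haud, ← hi1d]
  have hDiz : Dq iz = zz * (iz * iz) := by
    rw [hizdef, Dq_inv _ hcc1z, Dq_sub, Dq_one, hDzz, ← hizdef]; ring
  -- the Wronskian-type quantities
  have hJx : J * (x0 * x0) = x0 * x0 + (x0 * y1 - y0 * x1) := by
    rw [hJdef, Dq_mul, hDi0, ← hy1]
    linear_combination (y1 * x0 - y0 * x1 * (x0 * i0 + 1)) * hi0
  have hau : au * (x0 * (x0 * x0)) = (x0 * y2 - y0 * x2) * x0 - 2 * ((x0 * y1 - y0 * x1) * x1) := by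
    have h6 := congrArg Dq hJx
    simp only [Dq_mul, Dq_add, Dq_sub, Dq_one, Dq_C, Dq_ofNat] at h6
    simp only [← hx1, ← hx2, ← hy1, ← hy2, ← haud] at h6
    linear_combination x0 * h6 - 2 * x1 * hJx
  have hav : av * (x0 * (x0 * (x0 * x0)))
      = ((x0 * y3 - y0 * x3) + (x1 * y2 - y1 * x2)) * (x0 * x0)
        - 4 * ((x0 * y2 - y0 * x2) * (x0 * x1))
        + 6 * ((x0 * y1 - y0 * x1) * (x1 * x1))
        - 2 * ((x0 * y1 - y0 * x1) * (x0 * x2)) := by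
    have h8 := congrArg Dq hau
    simp only [Dq_mul, Dq_add, Dq_sub, Dq_one, Dq_C, Dq_ofNat] at h8
    simp only [← hx1, ← hx2, ← hx3, ← hy1, ← hy2, ← hy3, ← haud, ← havd] at h8
    linear_combination x0 * h8 - 3 * x1 * hau
  -- the Lagrange bilinear first integral E1 = 0
  have hE1z : C r₀ * (zz * (x0 * y1 - y0 * x1)) + zz * (x0 * y2 - y0 * x2)
      - (1 - zz) * (x0 * y3 - y0 * x3) + (1 - zz) * (x1 * y2 - y1 * x2)
      + C r₀ * (zz * (x0 * x0)) + 2 * (zz * (x0 * x1))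
      - 4 * ((1 - zz) * (x0 * x2)) + 2 * ((1 - zz) * (x1 * x1)) = 0 := by
    have hDE1 : Dq (C r₀ * (zz * (x0 * y1 - y0 * x1)) + zz * (x0 * y2 - y0 * x2)
        - (1 - zz) * (x0 * y3 - y0 * x3) + (1 - zz) * (x1 * y2 - y1 * x2)
        + C r₀ * (zz * (x0 * x0)) + 2 * (zz * (x0 * x1))
        - 4 * ((1 - zz) * (x0 * x2)) + 2 * ((1 - zz) * (x1 * x1)))
        = y0 * ((x4 - zz * x4)
            - zz * (x3 + x3 + C r₀ * x2 + x2 + C r₀ * x1 + C σ₄ * x0))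
          - x0 * (((y4 - zz * y4) + ((x3 + x3 + x3 + x3) - zz * (x3 + x3 + x3 + x3)))
            - (zz * (y3 + y3 + C r₀ * y2 + y2 + C r₀ * y1 + C σ₄ * y0)
               + zz * (x2 + x2 + x2 + x2 + x2 + x2 + C r₀ * x1 + C r₀ * x1
                  + x1 + x1 + C r₀ * x0))) := by
      simp only [Dq_add, Dq_sub, Dq_mul, Dq_one, Dq_C, Dq_ofNat, hDzz, hDi0, hDi1, hDiz]
      simp only [← hx1, ← hx2, ← hx3, ← hx4d, ← hy1, ← hy2, ← hy3, ← hy4d]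
      ring
    have hDE1z : Dq (C r₀ * (zz * (x0 * y1 - y0 * x1)) + zz * (x0 * y2 - y0 * x2)
        - (1 - zz) * (x0 * y3 - y0 * x3) + (1 - zz) * (x1 * y2 - y1 * x2)
        + C r₀ * (zz * (x0 * x0)) + 2 * (zz * (x0 * x1))
        - 4 * ((1 - zz) * (x0 * x2)) + 2 * ((1 - zz) * (x1 * x1))) = 0 := by
      rw [hDE1, hPhi0, hPhi1]; ring
    have h := S14.Dq_eq_C _ hDE1z
    rw [h]
    have hcz2 : constantCoeff zz = 0 := by
      rw [hzz, map_mul, constantCoeff_X, mul_zero]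
    simp only [map_add, map_sub, map_mul, hcz2, constantCoeff_C, map_one, map_ofNat]
    simp only [hx1, hx2, hx3, hy1, hy2, hy3, constantCoeff_Dq]
    norm_num
  -- the key relation for A₂ = D²I₁₁/I₁₁
  have hx0z : x0 ≠ 0 := fun h => hx0ne (by rw [h, map_zero])
  have hJz : J ≠ 0 := fun h => hJne (by rw [h, map_zero])
  have h1zz : (1 - zz) ≠ 0 := fun h => hcc1z (by rw [h, map_zero])
  have hMne : J * (x0 * (x0 * (x0 * x0))) * (1 - zz) ≠ 0 :=
    mul_ne_zero (mul_ne_zero hJz (mul_ne_zero hx0z (mul_ne_zero hx0z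
      (mul_ne_zero hx0z hx0z)))) h1zz
  have hA2 : av * i1 = 2 * ((x1 * i0) * (x1 * i0)) - 4 * (x2 * i0)
      - 2 * ((au * i1) * (x1 * i0)) - (1 - iz) * (au * i1)
      - 2 * ((1 - iz) * (x1 * i0)) - C r₀ * (1 - iz) := by
    apply mul_right_cancel₀ hMne
    linear_combination
      ((-1 : ℚ⟦X⟧) * (J*(x0*(x0*(x0*x0)))*(C r₀)) + (-1 : ℚ⟦X⟧)*(i1*J*au*(x0*(x0*(x0*x0))))
        + (-2 : ℚ⟦X⟧)*(i0*J*(x0*(x0*(x0*x0)))*x1)) * hiz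
      + ((av*(x0*(x0*(x0*x0)))) + 2*(i0*au*(x0*(x0*(x0*x0)))*x1) - zz*av*(x0*(x0*(x0*x0)))
        - zz*au*(x0*(x0*(x0*x0))) - 2*(zz*i0*au*(x0*(x0*(x0*x0)))*x1)) * hi1
      + (2*(au*(x0*(x0*x0))*x1) - 2*(J*(x0*x0)*(x1*x1)) + 4*(J*(x0*(x0*x0))*x2)
        - 2*(i0*J*(x0*(x0*x0))*(x1*x1)) - 2*(zz*au*(x0*(x0*x0))*x1)
        + 2*(zz*J*(x0*x0)*(x1*x1)) - 4*(zz*J*(x0*(x0*x0))*x2) - 2*(zz*J*(x0*(x0*x0))*x1)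
        + 2*(zz*i0*J*(x0*(x0*x0))*(x1*x1))) * hi0
      + (1 - zz) * hav
      + (2*x1 - 2*(zz*x1) - zz*x0) * hau
      + ((-2 : ℚ⟦X⟧)*(x1*x1) + 4*(x0*x2) + 2*(zz*(x1*x1)) - 4*(zz*(x0*x2)) - 2*(zz*(x0*x1))
        - zz*(x0*x0)*(C r₀)) * hJx
      + ((-1 : ℚ⟦X⟧)*(x0*x0)) * hE1z
  -- B₄ relation from Picard-Fuchs
  have hx4i : x4 * i0 = -((1 - iz) * (2*(x3*i0) + (C r₀ + 1)*(x2*i0) + C r₀*(x1*i0) + C σ₄)) := by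
    have hMne2 : (1 - zz) * x0 ≠ 0 := mul_ne_zero h1zz hx0z
    apply mul_right_cancel₀ hMne2
    linear_combination
      ((-1 : ℚ⟦X⟧)*(x0*(C σ₄)) + (-2 : ℚ⟦X⟧)*(i0*x0*x3) + (-1 : ℚ⟦X⟧)*(i0*x0*x2)
        + (-1 : ℚ⟦X⟧)*(i0*x0*x2*(C r₀)) + (-1 : ℚ⟦X⟧)*(i0*x0*x1*(C r₀))) * hiz
      + (x4 - zz*x4 - 2*(zz*x3) - zz*x2 - zz*x2*(C r₀) - zz*x1*(C r₀)) * hi0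
      + hPhi0
  -- derivatives of the generators
  have hDB : Dq (x1 * i0) = x2 * i0 - (x1 * i0) * (x1 * i0) := by
    rw [Dq_mul, hDi0, ← hx2]; ring
  have hDB2 : Dq (x2 * i0) = x3 * i0 - (x2 * i0) * (x1 * i0) := by
    rw [Dq_mul, hDi0, ← hx3]; ring
  have hDB3 : Dq (x3 * i0) = x4 * i0 - (x3 * i0) * (x1 * i0) := by
    rw [Dq_mul, hDi0, ← hx4d]; ring
  have hDA : Dq (au * i1) = av * i1 - (au * i1) * (au * i1) := by
    rw [Dq_mul, hDi1, ← havd]; ring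
  have hDXs : Dq Xs = Xs - Xs * Xs := by
    rw [hXs, Dq_sub, Dq_one, hDiz]
    linear_combination iz * hiz
  -- translation of the generators
  have hBg1 : Bgen a k 1 = x1 * i0 := by
    unfold Bgen; rw [Function.iterate_one, ← hx0, ← hx1, ← hi0d]
  have hBg2 : Bgen a k 2 = x2 * i0 := by
    unfold Bgen
    rw [show (2 : ℕ) = 1 + 1 from rfl, Function.iterate_succ_apply', Function.iterate_one,
      ← hx0, ← hx1, ← hx2, ← hi0d]
  have hBg3 : Bgen a k 3 = x3 * i0 := by
    unfold Bgen
    rw [show (3 : ℕ) = 1 + 1 + 1 from rfl, Function.iterate_succ_apply',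
      Function.iterate_succ_apply', Function.iterate_one, ← hx0, ← hx1, ← hx2, ← hx3, ← hi0d]
  have hAg1 : Agen a k 1 = au * i1 := by
    unfold Agen; rw [Function.iterate_one, ← hJd, ← haud, ← hi1d]
  have hcE1 : calE₁ a k = au * i1 + 2 * (x1 * i0) := by
    unfold calE₁ Eφφprop; rw [hAg1, hBg1]
  have hcE2 : calE₂ a k = (x1 * i0) * (au * i1 + 2 * (x1 * i0)) - x2 * i0 := by
    unfold calE₂ Eψprop Eφφprop Eφψprop; rw [hAg1, hBg1, hBg2]; ring
  have hcE3 : calE₃ a k r₀ = (x1*i0)*(x1*i0)*(au*i1 + 2*(x1*i0)) - (x1*i0)*(x2*i0)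
      - Xs*(x2*i0) - x3*i0 - C r₀*((x1*i0)*Xs) := by
    unfold calE₃ Eψprop Eφφprop Eφψprop Eψψprop
    rw [hAg1, hBg1, hBg2, hBg3, ← hXsd]; ring
  -- the four derivative identities
  have T1 : Dq (calE₁ a k) = 2 * calE₂ a k - calE₁ a k * calE₁ a k - Xs * calE₁ a k
      - C r₀ * Xs := by
    rw [hcE1, hcE2, hXs]
    simp only [Dq_add, Dq_sub, Dq_mul, Dq_one, Dq_C, Dq_ofNat, hDi0, hDi1, hDiz, hDzz]
    simp only [← hx2, ← hx3, ← hx4d, ← havd]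
    linear_combination hA2
  have T2 : Dq (calE₂ a k) = calE₃ a k r₀ - calE₁ a k * calE₂ a k - Xs * calE₂ a k := by
    rw [hcE1, hcE2, hcE3, hXs]
    simp only [Dq_add, Dq_sub, Dq_mul, Dq_one, Dq_C, Dq_ofNat, hDi0, hDi1, hDiz, hDzz]
    simp only [← hx2, ← hx3, ← hx4d, ← havd]
    linear_combination (x1 * i0) * hA2
  have T3 : Dq (calE₃ a k r₀) = C σ₄ * Xs - calE₂ a k * calE₂ a k
      - Xs * calE₃ a k r₀ := by
    rw [hcE2, hcE3, hXs]
    simp only [Dq_add, Dq_sub, Dq_mul, Dq_one, Dq_C, Dq_ofNat, hDi0, hDi1, hDiz, hDzz]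
    simp only [← hx2, ← hx3, ← hx4d, ← havd]
    linear_combination ((x1*i0)*(x1*i0)) * hA2 - hx4i - ((x2*i0) + C r₀*(x1*i0)) * iz * hiz
  -- closure of the subalgebra under Dq
  intro f hf
  have m1 : calE₁ a k ∈ Algebra.adjoin ℚ ({calE₁ a k, calE₂ a k, calE₃ a k r₀, Xs} : Set ℚ⟦X⟧) :=
    Algebra.subset_adjoin (by simp)
  have m2 : calE₂ a k ∈ Algebra.adjoin ℚ ({calE₁ a k, calE₂ a k, calE₃ a k r₀, Xs} : Set ℚ⟦X⟧) :=
    Algebra.subset_adjoin (by simp)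
  have m3 : calE₃ a k r₀ ∈ Algebra.adjoin ℚ ({calE₁ a k, calE₂ a k, calE₃ a k r₀, Xs} : Set ℚ⟦X⟧) :=
    Algebra.subset_adjoin (by simp)
  have m4 : Xs ∈ Algebra.adjoin ℚ ({calE₁ a k, calE₂ a k, calE₃ a k r₀, Xs} : Set ℚ⟦X⟧) :=
    Algebra.subset_adjoin (by simp)
  have mC : ∀ r : ℚ, C r ∈ Algebra.adjoin ℚ ({calE₁ a k, calE₂ a k, calE₃ a k r₀, Xs} : Set ℚ⟦X⟧) := by
    intro r
    have h : C r = r • (1 : ℚ⟦X⟧) := by rw [smul_eq_C_mul, mul_one]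
    rw [h]
    exact Subalgebra.smul_mem _ (one_mem _) r
  induction hf using Algebra.adjoin_induction with
  | mem x hx =>
    rcases hx with rfl | rfl | rfl | hx4m
    · rw [T1]
      exact sub_mem (sub_mem (sub_mem (mul_mem (mC 2) m2) (mul_mem m1 m1)) (mul_mem m4 m1))
        (mul_mem (mC r₀) m4)
    · rw [T2]
      exact sub_mem (sub_mem m3 (mul_mem m1 m2)) (mul_mem m4 m2)
    · rw [T3]
      exact sub_mem (sub_mem (mul_mem (mC σ₄) m4) (mul_mem m2 m2)) (mul_mem m4 m3)
    · rcases hx4m with rfl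
      rw [hDXs]
      exact sub_mem m4 (mul_mem m4 m4)
  | algebraMap r =>
    have h : algebraMap ℚ ℚ⟦X⟧ r = C r := rfl
    rw [h, Dq_C]
    exact zero_mem _
  | add p q hp hq ihp ihq =>
    rw [Dq_add]; exact add_mem ihp ihq
  | mul p q hp hq ihp ihq =>
    rw [Dq_mul]; exact add_mem (mul_mem hp ihq) (mul_mem hq ihp)



end S14

/-- the subalgebra `ℚ[𝓔₁, 𝓔₂, 𝓔₃, X]` of `ℚ⟦q⟧` is closed under the
derivation `D = q·d/dq`. -/
theorem statement_14 (a : Fin 5 → ℕ) (k : ℕ) (r₀ : ℚ)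
    (h : (a = ![1, 1, 1, 1, 2] ∧ k = 6 ∧ r₀ = 13 / 36) ∨
         (a = ![1, 1, 1, 1, 4] ∧ k = 8 ∧ r₀ = 11 / 32) ∨
         (a = ![1, 1, 1, 2, 5] ∧ k = 10 ∧ r₀ = 3 / 10)) :
    ∀ f ∈ Algebra.adjoin ℚ
        ({calE₁ a k, calE₂ a k, calE₃ a k r₀, Xser a k} : Set ℚ⟦X⟧),
      Dq f ∈ Algebra.adjoin ℚ
        ({calE₁ a k, calE₂ a k, calE₃ a k r₀, Xser a k} : Set ℚ⟦X⟧) := by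
  rcases h with ⟨ha, hk, hr⟩ | ⟨ha, hk, hr⟩ | ⟨ha, hk, hr⟩
  · subst ha; subst hk; subst hr
    exact S14.main _ _ _ (5/162) S14.HC6 S14.HS6
  · subst ha; subst hk; subst hr
    exact S14.main _ _ _ (105/4096) S14.HC8 S14.HS8
  · subst ha; subst hk; subst hr
    exact S14.main _ _ _ (189/10000) S14.HC10 S14.HS10

end
end
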